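/- Let C be a quantum [[n,k,d]] stabilizer code whose connectivity graph G on n vertices has no induced ε-expander subgraph on m or more vertices. Then either d ≤ 3m or k ≤ 2(c·log(n)·ε)²n, where c is a universal constant. -/

import Mathlib

open Finset

variable {V : Type*} [Fintype V] [DecidableEq V]

/-- Number of edges of `G` with one endpoint in `A` and the other in `W` (for disjoint `A`, `W`),
counted as ordered pairs, hence exactly once per edge. -/
def bdryTo (G : SimpleGraph V) [DecidableRel G.Adj] (A W : Finset V) : ℕ :=
  ((A ×ˢ W).filter fun p => G.Adj p.1 p.2).card

/-- Number of boundary edges of `A` inside the induced subgraph `G[B]`: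
edges of `G` with one endpoint in `A` and the other in `B \ A`. -/
def bdryIn (G : SimpleGraph V) [DecidableRel G.Adj] (B A : Finset V) : ℕ :=
  bdryTo G A (B \ A)

/-- The induced subgraph `G[U]` is an `ε`-expander: every `W ⊆ U` with `|W| ≤ |U|/2`
has at least `ε|W|` boundary edges inside `G[U]`. -/
def IsExpanderOn (G : SimpleGraph V) [DecidableRel G.Adj] (U : Finset V) (ε : ℝ) : Prop :=
  ∀ W ⊆ U, 2 * W.card ≤ U.card → ε * W.card ≤ (bdryIn G U W : ℝ)

/-- The symplectic form on `F_2^{2n}`, in the X/Z (symplectic) representation of `n`-qubit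
Pauli operators: two Paulis commute iff the form vanishes. -/
def sympl {n : ℕ} (a b : Fin n → ZMod 2 × ZMod 2) : ZMod 2 :=
  ∑ j, ((a j).1 * (b j).2 + (a j).2 * (b j).1)

/-- The weight of a Pauli operator in symplectic representation: the number of qubits on which
it acts nontrivially. -/
def qWeight {n : ℕ} (v : Fin n → ZMod 2 × ZMod 2) : ℕ :=
  (Finset.univ.filter fun j => v j ≠ 0).card

/-- Connectivity graph of a stabilizer code with checks `S`: qubits are vertices, two qubits are
adjacent iff some check acts nontrivially on both. -/
def qConnGraph {r n : ℕ} (S : Fin r → Fin n → ZMod 2 × ZMod 2) : SimpleGraph (Fin n) where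
  Adj u v := u ≠ v ∧ ∃ i, S i u ≠ 0 ∧ S i v ≠ 0
  symm := ⟨fun _ _ ⟨h1, i, ha, hb⟩ => ⟨h1.symm, i, hb, ha⟩⟩
  loopless := ⟨fun _ h => h.1 rfl⟩

instance {r n : ℕ} (S : Fin r → Fin n → ZMod 2 × ZMod 2) : DecidableRel (qConnGraph S).Adj :=
  fun _ _ => instDecidableAnd

/-- The stabilizer group (modulo phases) generated by the checks `S`. -/
def stabSpan {r n : ℕ} (S : Fin r → Fin n → ZMod 2 × ZMod 2) :
    Submodule (ZMod 2) (Fin n → ZMod 2 × ZMod 2) :=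
  Submodule.span (ZMod 2) (Set.range S)

namespace QAux

open Module

variable {n : ℕ}

abbrev Pn (n : ℕ) := Fin n → ZMod 2 × ZMod 2

lemma sympl_add_left (a a' b : Pn n) : sympl (a + a') b = sympl a b + sympl a' b := by
  simp only [sympl, ← Finset.sum_add_distrib]
  apply Finset.sum_congr rfl
  intro j _
  simp only [Pi.add_apply, Prod.fst_add, Prod.snd_add]
  ring

lemma sympl_smul_left (c : ZMod 2) (a b : Pn n) : sympl (c • a) b = c * sympl a b := by
  simp only [sympl, Finset.mul_sum]
  apply Finset.sum_congr rfl
  intro j _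
  simp only [Pi.smul_apply, Prod.smul_fst, Prod.smul_snd, smul_eq_mul]
  ring

lemma sympl_comm (a b : Pn n) : sympl a b = sympl b a :=
  Finset.sum_congr rfl fun j _ => by ring

lemma sympl_add_right (a b b' : Pn n) : sympl a (b + b') = sympl a b + sympl a b' := by
  rw [sympl_comm, sympl_add_left, sympl_comm b a, sympl_comm b' a]

def symB (n : ℕ) : LinearMap.BilinForm (ZMod 2) (Pn n) :=
  LinearMap.mk₂ (ZMod 2) (fun a b => sympl a b)
    sympl_add_left sympl_smul_left sympl_add_right
    (fun c a b => by
      show sympl a (c • b) = c • sympl a b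
      rw [sympl_comm, sympl_smul_left, sympl_comm a b]; rfl)

@[simp] lemma symB_apply (a b : Pn n) : symB n a b = sympl a b := rfl

lemma symB_isRefl : (symB n).IsRefl := fun a b h => by
  simpa [sympl_comm b a] using h

lemma sympl_single (j : Fin n) (p : ZMod 2 × ZMod 2) (v : Pn n) :
    sympl v (Pi.single j p) = (v j).1 * p.2 + (v j).2 * p.1 := by
  rw [sympl, Finset.sum_eq_single j]
  · simp
  · intro k _ hk; simp [Pi.single_apply, hk]
  · simp

lemma symB_nondegenerate : (symB n).Nondegenerate := by
  have hL : ∀ v : Pn n, (∀ w, symB n v w = 0) → v = 0 := by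
    intro v hv
    funext j
    have h1 := hv (Pi.single j (1, 0))
    have h2 := hv (Pi.single j (0, 1))
    rw [symB_apply, sympl_single] at h1 h2
    simp only at h1 h2
    have e1 : (v j).1 = 0 := by simpa using h2
    have e2 : (v j).2 = 0 := by simpa using h1
    show v j = 0
    ext <;> simp [e1, e2]
  exact ⟨hL, fun v hv => hL v fun w => by rw [symB_apply, sympl_comm]; exact hv w⟩

/-- Vectors supported inside the finset `A`. -/
def coordSub (n : ℕ) (A : Finset (Fin n)) : Submodule (ZMod 2) (Pn n) where
  carrier := {v | ∀ j ∉ A, v j = 0}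
  zero_mem' := fun j _ => rfl
  add_mem' := fun {x y} hx hy j hj => by simp [Pi.add_apply, hx j hj, hy j hj]
  smul_mem' := fun c x hx j hj => by simp [Pi.smul_apply, hx j hj]

lemma mem_coordSub {A : Finset (Fin n)} {v : Pn n} :
    v ∈ coordSub n A ↔ ∀ j ∉ A, v j = 0 := Iff.rfl

lemma sympl_zero_of_disj_supp {u w : Pn n} (h : ∀ j, u j = 0 ∨ w j = 0) : sympl u w = 0 :=
  Finset.sum_eq_zero fun j _ => by rcases h j with h | h <;> simp [h]

lemma orthogonal_coordSub (A : Finset (Fin n)) :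
    (symB n).orthogonal (coordSub n A) = coordSub n Aᶜ := by
  apply le_antisymm
  · intro v hv j hj
    simp only [Finset.mem_compl, not_not] at hj
    have h1 := hv (Pi.single j (1, 0)) (by
      intro i hi
      rw [Pi.single_apply, if_neg]; rintro rfl; exact hi hj)
    have h2 := hv (Pi.single j (0, 1)) (by
      intro i hi
      rw [Pi.single_apply, if_neg]; rintro rfl; exact hi hj)
    rw [symB_apply, sympl_comm, sympl_single] at h1 h2
    simp only at h1 h2
    have e1 : (v j).1 = 0 := by simpa using h2
    have e2 : (v j).2 = 0 := by simpa using h1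
    show v j = 0
    ext <;> simp [e1, e2]
  · intro v hv s hs
    rw [symB_apply]
    apply sympl_zero_of_disj_supp
    intro j
    by_cases hj : j ∈ A
    · exact Or.inr (hv j (by simpa using hj))
    · exact Or.inl (hs j hj)

lemma orthogonal_sup (X Y : Submodule (ZMod 2) (Pn n)) :
    (symB n).orthogonal (X ⊔ Y) = (symB n).orthogonal X ⊓ (symB n).orthogonal Y := by
  apply le_antisymm
  · exact le_inf (LinearMap.BilinForm.orthogonal_le le_sup_left)
      (LinearMap.BilinForm.orthogonal_le le_sup_right)
  · rintro v ⟨hvX, hvY⟩ t ht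
    obtain ⟨a, ha, b, hb, rfl⟩ := Submodule.mem_sup.mp ht
    rw [map_add, LinearMap.add_apply,
      hvX a ha, hvY b hb, add_zero]

lemma orthogonal_inf (X Y : Submodule (ZMod 2) (Pn n)) :
    (symB n).orthogonal (X ⊓ Y) = (symB n).orthogonal X ⊔ (symB n).orthogonal Y := by
  have hd := symB_nondegenerate (n := n)
  have hr := symB_isRefl (n := n)
  conv_lhs => rw [← LinearMap.BilinForm.orthogonal_orthogonal hd hr X,
    ← LinearMap.BilinForm.orthogonal_orthogonal hd hr Y, ← orthogonal_sup]
  rw [LinearMap.BilinForm.orthogonal_orthogonal hd hr]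

lemma finrank_orthogonal' (W : Submodule (ZMod 2) (Pn n)) :
    finrank (ZMod 2) ((symB n).orthogonal W) + finrank (ZMod 2) W = 2 * n := by
  have h := LinearMap.BilinForm.finrank_add_finrank_orthogonal (symB_isRefl (n := n)) W
  rw [LinearMap.BilinForm.orthogonal_top_eq_bot symB_nondegenerate] at h
  have hV : finrank (ZMod 2) (Pn n) = 2 * n := by
    simp [Module.finrank_pi_fintype, Module.finrank_prod]; ring
  rw [hV, inf_bot_eq] at h
  rw [show finrank (ZMod 2) (⊥ : Submodule (ZMod 2) (Pn n)) = 0 from finrank_bot _ _] at h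
  omega

/-- Restriction of a Pauli vector to a set of qubits. -/
def rst (A : Finset (Fin n)) (v : Pn n) : Pn n := fun j => if j ∈ A then v j else 0

lemma rst_eq_self {A : Finset (Fin n)} {v : Pn n} (h : ∀ j, v j ≠ 0 → j ∈ A) :
    rst A v = v := by
  funext j
  by_cases hj : j ∈ A
  · simp [rst, hj]
  · simp only [rst, if_neg hj]
    by_contra hne
    exact hj (h j fun h0 => hne h0.symm)

lemma rst_add_rst {A B : Finset (Fin n)} (hAB : Disjoint A B) {v : Pn n}
    (h : ∀ j, v j ≠ 0 → j ∈ A ∪ B) : rst A v + rst B v = v := by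
  funext j
  by_cases hA : j ∈ A
  · have hB : j ∉ B := Finset.disjoint_left.mp hAB hA
    simp [rst, hA, hB, Pi.add_apply]
  · by_cases hB : j ∈ B
    · simp [rst, hA, hB, Pi.add_apply]
    · have : v j = 0 := by
        by_contra hne
        rcases Finset.mem_union.mp (h j hne) with h' | h' <;> [exact hA h'; exact hB h']
      simp [rst, hA, hB, Pi.add_apply, this]

lemma qWeight_le_card {A : Finset (Fin n)} {v : Pn n} (h : ∀ j, v j ≠ 0 → j ∈ A) :
    qWeight v ≤ A.card := by
  apply Finset.card_le_card
  intro j hj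
  simp only [qWeight, Finset.mem_filter] at hj
  exact h j hj.2

/-- Splitting lemma: if the support of a commuting `v` is contained in `A ∪ B` with `A`, `B`
disjoint and non-adjacent in the connectivity graph, then the restriction of `v` to `A` still
commutes with all checks. -/
lemma split {r : ℕ} (S : Fin r → Pn n) {A B : Finset (Fin n)} {v : Pn n}
    (hAB : Disjoint A B)
    (hnoadj : ∀ a ∈ A, ∀ b ∈ B, ¬ (qConnGraph S).Adj a b)
    (hsupp : ∀ j, v j ≠ 0 → j ∈ A ∪ B)
    (hv : ∀ i, sympl (S i) v = 0) :
    ∀ i, sympl (S i) (rst A v) = 0 := by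
  intro i
  by_cases hA : ∃ a ∈ A, S i a ≠ 0 ∧ v a ≠ 0
  · obtain ⟨a, ha, hSa, hva⟩ := hA
    have hB : ∀ j, S i j = 0 ∨ rst B v j = 0 := by
      intro j
      by_cases hjB : j ∈ B
      · by_cases hSj : S i j = 0
        · exact Or.inl hSj
        · right
          simp only [rst, if_pos hjB]
          by_contra hvj
          have hne : a ≠ j := fun h => (Finset.disjoint_left.mp hAB ha) (h ▸ hjB)
          exact hnoadj a ha j hjB ⟨hne, i, hSa, hSj⟩
      · exact Or.inr (by simp [rst, hjB])
    have hsplit : rst A v + rst B v = v := rst_add_rst hAB hsupp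
    have := hv i
    rw [← hsplit, sympl_add_right, sympl_zero_of_disj_supp hB, add_zero] at this
    exact this
  · push_neg at hA
    apply sympl_zero_of_disj_supp
    intro j
    by_cases hjA : j ∈ A
    · by_cases hSj : S i j = 0
      · exact Or.inl hSj
      · right
        simp only [rst, if_pos hjA]
        by_contra hvj
        exact hvj (hA j hjA hSj)
    · exact Or.inr (by simp [rst, hjA])

/-- The expander decomposition lemma. -/
lemma decomp {r m : ℕ} (S : Fin r → Pn n) (ε : ℝ) (hε : 0 ≤ ε) (hm : 0 < m)
    (hNoExp : ∀ U : Finset (Fin n), m ≤ U.card → ¬ IsExpanderOn (qConnGraph S) U ε)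
    (hsmall : ∀ v : Pn n, (∀ i, sympl (S i) v = 0) → qWeight v < m → v ∈ stabSpan S) :
    ∀ (K : ℕ) (U : Finset (Fin n)), U.card ≤ K → ∃ R : Finset (Fin n), R ⊆ U ∧
      ((R.card : ℝ) ≤ 2 * ε * U.card * Real.logb 2 (max (U.card : ℝ) 1)) ∧
      (∀ v : Pn n, (∀ i, sympl (S i) v = 0) → (∀ j, v j ≠ 0 → j ∈ U \ R) →
        v ∈ stabSpan S) := by
  intro K
  induction K with
  | zero =>
    intro U hU
    refine ⟨∅, Finset.empty_subset _, ?_, ?_⟩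
    · simp only [Finset.card_empty, Nat.cast_zero]
      exact mul_nonneg (mul_nonneg (mul_nonneg two_pos.le hε) (Nat.cast_nonneg _))
        (Real.logb_nonneg (by norm_num) (le_max_right _ _))
    intro v hv hsupp
    apply hsmall v hv
    calc qWeight v ≤ U.card := qWeight_le_card fun j hj => (Finset.mem_sdiff.mp (hsupp j hj)).1
    _ = 0 := Nat.le_zero.mp hU
    _ < m := hm
  | succ K ih =>
    intro U hU
    by_cases hUm : U.card < m
    · refine ⟨∅, Finset.empty_subset _, ?_, ?_⟩
      · simp only [Finset.card_empty, Nat.cast_zero]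
        exact mul_nonneg (mul_nonneg (mul_nonneg two_pos.le hε) (Nat.cast_nonneg _))
          (Real.logb_nonneg (by norm_num) (le_max_right _ _))
      intro v hv hsupp
      apply hsmall v hv
      exact lt_of_le_of_lt (qWeight_le_card fun j hj => (Finset.mem_sdiff.mp (hsupp j hj)).1) hUm
    · have hm' : m ≤ U.card := not_lt.mp hUm
      have hne := hNoExp U hm'
      rw [IsExpanderOn] at hne
      push_neg at hne
      obtain ⟨W, hWU, hW2, hWlt⟩ := hne
      -- hWlt : (bdryIn (qConnGraph S) U W : ℝ) < ε * W.card
      have hWpos : 0 < W.card := by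
        rcases Nat.eq_zero_or_pos W.card with h | h
        · rw [h] at hWlt
          simp only [Nat.cast_zero, mul_zero] at hWlt
          exact absurd hWlt (not_lt.mpr (Nat.cast_nonneg _))
        · exact h
      set E : Finset (Fin n × Fin n) :=
        (W ×ˢ (U \ W)).filter (fun p => (qConnGraph S).Adj p.1 p.2) with hE
      have hEcard : E.card = bdryIn (qConnGraph S) U W := rfl
      set R0 : Finset (Fin n) := E.image Prod.fst ∪ E.image Prod.snd with hR0
      have hR0sub : R0 ⊆ U := by
        intro x hx
        rcases Finset.mem_union.mp hx with hx | hx <;>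
          obtain ⟨p, hp, rfl⟩ := Finset.mem_image.mp hx <;>
          have hp' := Finset.mem_product.mp (Finset.mem_filter.mp hp).1
        · exact hWU hp'.1
        · exact (Finset.mem_sdiff.mp hp'.2).1
      have hR0card : R0.card ≤ 2 * E.card := by
        calc R0.card ≤ (E.image Prod.fst).card + (E.image Prod.snd).card :=
              Finset.card_union_le _ _
        _ ≤ E.card + E.card := Nat.add_le_add (Finset.card_image_le) (Finset.card_image_le)
        _ = 2 * E.card := (two_mul _).symm
      have hWltU : W.card < U.card := by omega
      obtain ⟨RW, hRWsub, hRWcard, hRWcorr⟩ := ih W (by omega)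
      have hUWcard : (U \ W).card = U.card - W.card := Finset.card_sdiff_of_subset hWU
      obtain ⟨RV, hRVsub, hRVcard, hRVcorr⟩ := ih (U \ W) (by omega)
      refine ⟨R0 ∪ RW ∪ RV, ?_, ?_, ?_⟩
      · intro x hx
        rcases Finset.mem_union.mp hx with hx | hx
        · rcases Finset.mem_union.mp hx with hx | hx
          · exact hR0sub hx
          · exact hWU (hRWsub hx)
        · exact Finset.sdiff_subset (hRVsub hx)
      · -- the cardinality bound
        have hcast : ((R0 ∪ RW ∪ RV).card : ℝ) ≤ (R0.card : ℝ) + RW.card + RV.card := by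
          have h1 : (R0 ∪ RW ∪ RV).card ≤ R0.card + RW.card + RV.card :=
            le_trans (Finset.card_union_le _ _)
              (Nat.add_le_add_right (Finset.card_union_le _ _) _)
          exact_mod_cast h1
        set u : ℝ := (U.card : ℝ) with hu
        set w : ℝ := (W.card : ℝ) with hw
        have hw1 : (1 : ℝ) ≤ w := by rw [hw]; exact_mod_cast hWpos
        have hu2w : 2 * w ≤ u := by rw [hw, hu]; exact_mod_cast hW2
        have hu1 : (1 : ℝ) ≤ u := by linarith
        have huw1 : (1 : ℝ) ≤ u - w := by linarith
        have hmaxU : max u 1 = u := max_eq_left hu1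
        have hmaxW : max w 1 = w := max_eq_left hw1
        have hUW : ((U \ W).card : ℝ) = u - w := by
          rw [hUWcard]
          push_cast [Nat.cast_sub (le_of_lt hWltU)]
          ring
        set Lu : ℝ := Real.logb 2 u with hLu
        have key1 : Real.logb 2 w ≤ Lu - 1 := by
          have h1 : Real.logb 2 w ≤ Real.logb 2 (u / 2) := by
            rw [Real.logb_le_logb (by norm_num) (by linarith) (by linarith)]
            linarith
          have h2 : Real.logb 2 (u / 2) = Lu - 1 := by
            rw [Real.logb_div (by linarith) (by norm_num)]
            simp [Real.logb_self_eq_one, hLu]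
          linarith
        have key2 : Real.logb 2 (u - w) ≤ Lu := by
          rw [Real.logb_le_logb (by norm_num) (by linarith) (by linarith)]
          linarith
        have hLu0 : 0 ≤ Lu := Real.logb_nonneg (by norm_num) hu1
        have hR0r : (R0.card : ℝ) ≤ 2 * ε * w := by
          have h1 : (R0.card : ℝ) ≤ 2 * (E.card : ℝ) := by exact_mod_cast hR0card
          have h2 : (E.card : ℝ) < ε * w := by rw [hEcard]; exact hWlt
          linarith
        have hRWr : (RW.card : ℝ) ≤ 2 * ε * w * (Lu - 1) := by
          have := hRWcard
          rw [hmaxW] at this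
          calc (RW.card : ℝ) ≤ 2 * ε * w * Real.logb 2 w := this
          _ ≤ 2 * ε * w * (Lu - 1) := by
              apply mul_le_mul_of_nonneg_left key1
              positivity
        have hRVr : (RV.card : ℝ) ≤ 2 * ε * (u - w) * Lu := by
          have := hRVcard
          rw [hUW] at this
          rw [show max (u - w) 1 = u - w from max_eq_left huw1] at this
          calc (RV.card : ℝ) ≤ 2 * ε * (u - w) * Real.logb 2 (u - w) := this
          _ ≤ 2 * ε * (u - w) * Lu := by
              apply mul_le_mul_of_nonneg_left key2
              positivity
        rw [hmaxU]
        have hεw : 0 ≤ ε * w := by positivity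
        nlinarith [hcast, hR0r, hRWr, hRVr]
      · -- correctness
        intro v hv hsupp
        set R : Finset (Fin n) := R0 ∪ RW ∪ RV with hR
        set A : Finset (Fin n) := W \ R with hA
        set B : Finset (Fin n) := (U \ W) \ R with hB
        have hABdisj : Disjoint A B := by
          apply Finset.disjoint_left.mpr
          intro x hx hx'
          exact (Finset.mem_sdiff.mp (Finset.mem_sdiff.mp hx').1).2 (Finset.mem_sdiff.mp hx).1
        have hnoadj : ∀ a ∈ A, ∀ b ∈ B, ¬ (qConnGraph S).Adj a b := by
          intro a ha b hb hadj
          have haW : a ∈ W := (Finset.mem_sdiff.mp ha).1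
          have haR : a ∉ R := (Finset.mem_sdiff.mp ha).2
          have hbUW : b ∈ U \ W := (Finset.mem_sdiff.mp hb).1
          have hmemE : (a, b) ∈ E := by
            rw [hE]
            exact Finset.mem_filter.mpr ⟨Finset.mem_product.mpr ⟨haW, hbUW⟩, hadj⟩
          apply haR
          rw [hR]
          exact Finset.mem_union.mpr (Or.inl (Finset.mem_union.mpr (Or.inl
            (Finset.mem_union.mpr (Or.inl (Finset.mem_image.mpr ⟨(a, b), hmemE, rfl⟩))))))
        have hsupp' : ∀ j, v j ≠ 0 → j ∈ A ∪ B := by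
          intro j hj
          have h := Finset.mem_sdiff.mp (hsupp j hj)
          by_cases hjW : j ∈ W
          · exact Finset.mem_union.mpr (Or.inl (Finset.mem_sdiff.mpr ⟨hjW, h.2⟩))
          · exact Finset.mem_union.mpr (Or.inr (Finset.mem_sdiff.mpr
              ⟨Finset.mem_sdiff.mpr ⟨h.1, hjW⟩, h.2⟩))
        have hvA : ∀ i, sympl (S i) (rst A v) = 0 := split S hABdisj hnoadj hsupp' hv
        have hvB : ∀ i, sympl (S i) (rst B v) = 0 := by
          apply split S hABdisj.symm _ _ hv
          · intro b hb a ha hadj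
            exact hnoadj a ha b hb hadj.symm
          · intro j hj
            rw [Finset.union_comm]
            exact hsupp' j hj
        have hmemA : rst A v ∈ stabSpan S := by
          apply hRWcorr _ hvA
          intro j hj
          have hjA : j ∈ A := by
            by_contra h
            exact hj (by simp [rst, h])
          have hjv : rst A v j = v j := by simp [rst, hjA]
          refine Finset.mem_sdiff.mpr ⟨(Finset.mem_sdiff.mp hjA).1, fun hjRW => ?_⟩
          exact (Finset.mem_sdiff.mp hjA).2 (Finset.mem_union.mpr (Or.inl
            (Finset.mem_union.mpr (Or.inr hjRW))))
        have hmemB : rst B v ∈ stabSpan S := by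
          apply hRVcorr _ hvB
          intro j hj
          have hjB : j ∈ B := by
            by_contra h
            exact hj (by simp [rst, h])
          refine Finset.mem_sdiff.mpr ⟨(Finset.mem_sdiff.mp hjB).1, fun hjRV => ?_⟩
          exact (Finset.mem_sdiff.mp hjB).2 (Finset.mem_union.mpr (Or.inr hjRV))
        have : rst A v + rst B v = v := rst_add_rst hABdisj hsupp'
        rw [← this]
        exact Submodule.add_mem _ hmemA hmemB


end QAux

set_option maxHeartbeats 1000000

theorem stmt9 : ∃ c : ℝ, 0 < c ∧
    ∀ (n r k d m : ℕ) (S : Fin r → Fin n → ZMod 2 × ZMod 2) (ε : ℝ), 0 ≤ ε →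
      (∀ i j, sympl (S i) (S j) = 0) →
      k + Module.finrank (ZMod 2) (stabSpan S) = n →
      (∀ v : Fin n → ZMod 2 × ZMod 2, (∀ i, sympl (S i) v = 0) → v ∉ stabSpan S →
        d ≤ qWeight v) →
      (¬ ∃ U : Finset (Fin n), m ≤ U.card ∧ IsExpanderOn (qConnGraph S) U ε) →
      (d ≤ 3 * m ∨ (k : ℝ) ≤ 2 * (c * Real.log n * ε) ^ 2 * n) := by
  classical
  refine ⟨3, by norm_num, ?_⟩
  intro n r k d m S ε hε hComm h_rank h_dist hNoExp
  by_cases hd : d ≤ 3 * m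
  · exact Or.inl hd
  right
  push_neg at hd
  -- m is positive, since the empty set is always an expander
  have hm : 0 < m := by
    rcases Nat.eq_zero_or_pos m with h0 | h; swap
    · exact h
    exfalso
    apply hNoExp
    refine ⟨∅, by simp [h0], ?_⟩
    intro W hW _
    rw [Finset.subset_empty.mp hW]
    simp
  have hNoExp' : ∀ U : Finset (Fin n), m ≤ U.card → ¬ IsExpanderOn (qConnGraph S) U ε :=
    fun U hU hExp => hNoExp ⟨U, hU, hExp⟩
  set Stab : Submodule (ZMod 2) (QAux.Pn n) := stabSpan S with hStab
  set N : Submodule (ZMod 2) (QAux.Pn n) := (QAux.symB n).orthogonal Stab with hN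
  -- membership in N
  have mem_N_iff : ∀ v : QAux.Pn n, v ∈ N ↔ ∀ i, sympl (S i) v = 0 := by
    intro v
    constructor
    · intro hv i
      have := hv (S i) (Submodule.subset_span (Set.mem_range_self i))
      simpa using this
    · intro hv s hs
      rw [QAux.symB_apply]
      induction hs using Submodule.span_induction with
      | mem x hx => obtain ⟨i, rfl⟩ := hx; exact hv i
      | zero => exact QAux.sympl_zero_of_disj_supp (fun j => Or.inl rfl)
      | add x y _ _ hx hy => rw [QAux.sympl_add_left, hx, hy, add_zero]
      | smul c x _ hx => rw [QAux.sympl_smul_left, hx, mul_zero]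
  have hStabN : Stab ≤ N := by
    intro s hs
    rw [mem_N_iff]
    intro i
    rw [QAux.sympl_comm]
    induction hs using Submodule.span_induction with
    | mem x hx => obtain ⟨j, rfl⟩ := hx; rw [QAux.sympl_comm]; exact hComm i j
    | zero => exact QAux.sympl_zero_of_disj_supp (fun j => Or.inl rfl)
    | add x y _ _ hx hy => rw [QAux.sympl_add_left, hx, hy, add_zero]
    | smul c x _ hx => rw [QAux.sympl_smul_left, hx, mul_zero]
  have hsmall : ∀ v : QAux.Pn n, (∀ i, sympl (S i) v = 0) → qWeight v < m → v ∈ stabSpan S := by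
    intro v hv hw
    by_contra hns
    have := h_dist v hv hns
    omega
  -- level 1 decomposition
  have hcardle : ∀ U : Finset (Fin n), U.card ≤ n := fun U => by
    simpa using Finset.card_le_card (Finset.subset_univ U)
  obtain ⟨R1, hR1sub, hR1card, hR1corr⟩ :=
    QAux.decomp S ε hε hm hNoExp' hsmall n Finset.univ (by simp)
  -- level 2 decomposition
  obtain ⟨R2, hR2sub, hR2card, hR2corr⟩ :=
    QAux.decomp S ε hε hm hNoExp' hsmall n R1 (hcardle R1)
  -- cleaning lemma
  set M : Submodule (ZMod 2) (QAux.Pn n) := N ⊓ QAux.coordSub n R1 with hM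
  have hcorrA : N ⊓ QAux.coordSub n R1ᶜ ≤ Stab := by
    rintro v ⟨hvN, hvA⟩
    apply hR1corr v ((mem_N_iff v).mp hvN)
    intro j hj
    rw [Finset.mem_sdiff]
    refine ⟨Finset.mem_univ j, fun hjR1 => ?_⟩
    exact hj (hvA j (by simpa using hjR1))
  have hclean : N ≤ M ⊔ Stab := by
    have hd' := QAux.symB_nondegenerate (n := n)
    have hr' := QAux.symB_isRefl (n := n)
    have horth : (QAux.symB n).orthogonal (M ⊔ Stab) ≤ Stab := by
      rw [QAux.orthogonal_sup, hM, QAux.orthogonal_inf,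
        LinearMap.BilinForm.orthogonal_orthogonal hd' hr', QAux.orthogonal_coordSub]
      rintro x ⟨hx1, hxN⟩
      obtain ⟨s, hs, a, ha, rfl⟩ := Submodule.mem_sup.mp hx1
      have haN : a ∈ N := by
        have : s + a - s ∈ N := Submodule.sub_mem _ hxN (hStabN hs)
        simpa using this
      have : a ∈ Stab := hcorrA ⟨haN, ha⟩
      exact Submodule.add_mem _ hs this
    calc N = (QAux.symB n).orthogonal Stab := hN
    _ ≤ (QAux.symB n).orthogonal ((QAux.symB n).orthogonal (M ⊔ Stab)) :=
        LinearMap.BilinForm.orthogonal_le horth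
    _ = M ⊔ Stab := LinearMap.BilinForm.orthogonal_orthogonal hd' hr' _
  have hNeq : N = M ⊔ Stab := le_antisymm hclean (sup_le inf_le_left hStabN)
  -- the restriction map to R2
  set ψ : M →ₗ[ZMod 2] (R2 → ZMod 2 × ZMod 2) :=
    (LinearMap.funLeft (ZMod 2) (ZMod 2 × ZMod 2) (fun j : R2 => (j : Fin n))) ∘ₗ M.subtype
    with hψ
  have hker : Submodule.map M.subtype (LinearMap.ker ψ) ≤ M ⊓ Stab := by
    rintro x ⟨y, hy, rfl⟩
    refine ⟨y.2, ?_⟩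
    have hyN : (y : QAux.Pn n) ∈ N := y.2.1
    have hyR1 : (y : QAux.Pn n) ∈ QAux.coordSub n R1 := y.2.2
    apply hR2corr _ ((mem_N_iff _).mp hyN)
    intro j hj
    rw [Finset.mem_sdiff]
    constructor
    · by_contra hjR1
      exact hj (hyR1 j hjR1)
    · intro hjR2
      apply hj
      have := congr_fun (LinearMap.mem_ker.mp hy) ⟨j, hjR2⟩
      simpa [hψ, LinearMap.funLeft] using this
  -- dimension counting
  have f1 : Module.finrank (ZMod 2) N + Module.finrank (ZMod 2) Stab = 2 * n := QAux.finrank_orthogonal' Stab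
  have f2 : Module.finrank (ZMod 2) (M ⊔ Stab : Submodule (ZMod 2) (QAux.Pn n))
      + Module.finrank (ZMod 2) (M ⊓ Stab : Submodule (ZMod 2) (QAux.Pn n))
      = Module.finrank (ZMod 2) M + Module.finrank (ZMod 2) Stab :=
    Submodule.finrank_sup_add_finrank_inf_eq M Stab
  have f4 : Module.finrank (ZMod 2) (LinearMap.range ψ) + Module.finrank (ZMod 2) (LinearMap.ker ψ)
      = Module.finrank (ZMod 2) M := LinearMap.finrank_range_add_finrank_ker ψ
  have f5 : Module.finrank (ZMod 2) (LinearMap.range ψ) ≤ 2 * R2.card := by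
    have h1 : Module.finrank (ZMod 2) (LinearMap.range ψ)
        ≤ Module.finrank (ZMod 2) (R2 → ZMod 2 × ZMod 2) := Submodule.finrank_le _
    have h2 : Module.finrank (ZMod 2) (R2 → ZMod 2 × ZMod 2) = 2 * R2.card := by
      rw [Module.finrank_pi_fintype]
      simp [Module.finrank_prod, Fintype.card_coe, two_mul, Finset.sum_const, mul_comm]
    omega
  have f6 : Module.finrank (ZMod 2) (LinearMap.ker ψ)
      ≤ Module.finrank (ZMod 2) (M ⊓ Stab : Submodule (ZMod 2) (QAux.Pn n)) := by
    rw [← Submodule.finrank_map_subtype_eq M (LinearMap.ker ψ)]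
    exact Submodule.finrank_mono hker
  have h_rank2 : k + Module.finrank (ZMod 2) Stab = n := h_rank
  have hkR2 : k ≤ R2.card := by
    rw [← hNeq] at f2
    omega
  -- final real arithmetic
  set L : ℝ := Real.logb 2 (max (n : ℝ) 1) with hL
  have hL0 : 0 ≤ L := Real.logb_nonneg (by norm_num) (le_max_right _ _)
  have hmono : ∀ a b : ℕ, a ≤ b →
      Real.logb 2 (max (a : ℝ) 1) ≤ Real.logb 2 (max (b : ℝ) 1) := by
    intro a b hab
    rw [Real.logb_le_logb (by norm_num) (lt_of_lt_of_le one_pos (le_max_right _ _))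
      (lt_of_lt_of_le one_pos (le_max_right _ _))]
    exact max_le_max (by exact_mod_cast hab) le_rfl
  have hR1n : (R1.card : ℝ) ≤ 2 * ε * n * L := by
    calc (R1.card : ℝ) ≤ 2 * ε * (Finset.univ : Finset (Fin n)).card
          * Real.logb 2 (max ((Finset.univ : Finset (Fin n)).card : ℝ) 1) := hR1card
    _ = 2 * ε * n * L := by rw [Finset.card_univ, Fintype.card_fin]
  have hR2b : (R2.card : ℝ) ≤ 2 * ε * L * (R1.card : ℝ) := by
    calc (R2.card : ℝ) ≤ 2 * ε * R1.card * Real.logb 2 (max (R1.card : ℝ) 1) := hR2card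
    _ ≤ 2 * ε * R1.card * L := by
        apply mul_le_mul_of_nonneg_left (hmono _ _ (hcardle R1))
        exact mul_nonneg (mul_nonneg two_pos.le hε) (Nat.cast_nonneg _)
    _ = 2 * ε * L * (R1.card : ℝ) := by ring
  have hkb : (k : ℝ) ≤ 4 * ε ^ 2 * n * L ^ 2 := by
    have h1 : (k : ℝ) ≤ (R2.card : ℝ) := by exact_mod_cast hkR2
    have h2 : 2 * ε * L * (R1.card : ℝ) ≤ 2 * ε * L * (2 * ε * n * L) := by
      apply mul_le_mul_of_nonneg_left hR1n
      positivity
    calc (k : ℝ) ≤ 2 * ε * L * (2 * ε * n * L) := by linarith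
    _ = 4 * ε ^ 2 * n * L ^ 2 := by ring
  have hlogeq : Real.log (max (n : ℝ) 1) = Real.log n := by
    rcases le_or_gt 1 (n : ℝ) with h | h
    · rw [max_eq_left h]
    · have hn0 : n = 0 := by exact_mod_cast Nat.lt_one_iff.mp (by exact_mod_cast h)
      have : (n : ℝ) = 0 := by rw [hn0]; simp
      rw [this]
      simp
  have hLlog : L = Real.log n / Real.log 2 := by
    rw [hL, Real.logb, hlogeq]
  have hlog2 : (0.6931471803 : ℝ) < Real.log 2 := Real.log_two_gt_d9
  have hlogn : 0 ≤ Real.log n := by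
    rw [← hlogeq]
    exact Real.log_nonneg (le_max_right _ _)
  rw [hLlog] at hkb
  have hfinal : 4 * ε ^ 2 * n * (Real.log n / Real.log 2) ^ 2
      ≤ 2 * (3 * Real.log n * ε) ^ 2 * n := by
    have hn0 : (0 : ℝ) ≤ n := Nat.cast_nonneg n
    have h2 : (Real.log n / Real.log 2) ^ 2 = (Real.log n) ^ 2 / (Real.log 2) ^ 2 := by
      rw [div_pow]
    rw [h2]
    have hlog2sq : (0.48 : ℝ) ≤ (Real.log 2) ^ 2 := by nlinarith
    have hkey : (Real.log n) ^ 2 / (Real.log 2) ^ 2 ≤ (Real.log n) ^ 2 / 0.48 := by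
      apply div_le_div_of_nonneg_left (by positivity) (by norm_num) hlog2sq
    calc 4 * ε ^ 2 * n * ((Real.log n) ^ 2 / (Real.log 2) ^ 2)
        ≤ 4 * ε ^ 2 * n * ((Real.log n) ^ 2 / 0.48) := by
          apply mul_le_mul_of_nonneg_left hkey
          positivity
    _ = (4 / 0.48) * (ε ^ 2 * n * Real.log n ^ 2) := by ring
    _ ≤ 18 * (ε ^ 2 * n * Real.log n ^ 2) := by
        have hX : (0:ℝ) ≤ ε ^ 2 * n * Real.log n ^ 2 := by positivity
        nlinarith [hX]
    _ = 2 * (3 * Real.log n * ε) ^ 2 * n := by ring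
  linarith
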